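/- Let T be a cocompact G-tree, T̃ a minimal G-tree, and q : T̃ → T a G-equivariant tree morphism that is surjective but not locally injective. Then every vertex of T is faced by a collapsing pair: for every vertex v of T there exist distinct adjacent oriented edges ẽ₁, ẽ₂ of T̃ with common initial vertex and q(ẽ₁) = q(ẽ₂) = e, such that the geodesic from the image of their common initial vertex to v passes through e. -/

import Mathlib

/-- A `G`-tree is minimal if it has no proper nonempty `G`-invariant subtree
(nonempty convex invariant vertex set). -/
def IsMinimalGTree {V : Type*} (T : SimpleGraph V) (G : Type*) [Group G]
    [MulAction G V] : Prop :=
  ∀ A : Set V, A.Nonempty →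
    (∀ a b c : V, a ∈ A → c ∈ A → T.dist a b + T.dist b c = T.dist a c → b ∈ A) →
    (∀ (g : G) (x : V), x ∈ A → g • x ∈ A) →
    A = Set.univ

open SimpleGraph

section TreeLemmas

variable {V : Type*} {T : SimpleGraph V}

/-- In a tree, every path realizes the distance between its endpoints. -/
lemma tree_path_length_eq_dist (hT : T.IsTree) {a b : V} (p : T.Walk a b) (hp : p.IsPath) :
    p.length = T.dist a b := by
  obtain ⟨p', hp', hl'⟩ := hT.isConnected.exists_path_of_dist a b
  have heq : (⟨p, hp⟩ : T.Path a b) = ⟨p', hp'⟩ := hT.IsAcyclic.path_unique _ _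
  rw [show p = p' from congrArg Subtype.val heq, hl']

/-- Splitting a path of a tree at a support vertex splits the distance. -/
lemma tree_dist_split (hT : T.IsTree) {a b y : V} (p : T.Walk a b) (hp : p.IsPath)
    (hy : y ∈ p.support) : T.dist a y + T.dist y b = T.dist a b := by
  classical
  rw [← tree_path_length_eq_dist hT p hp,
      ← tree_path_length_eq_dist hT _ (hp.takeUntil hy),
      ← tree_path_length_eq_dist hT _ (hp.dropUntil hy),
      ← SimpleGraph.Walk.length_append, SimpleGraph.Walk.take_spec]

/-- In a tree, distances to the two endpoints of an edge differ by exactly one. -/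
lemma tree_adj_dist_cases (hT : T.IsTree) {r u : V} (h : T.Adj r u) (x : V) :
    T.dist x r = T.dist x u + 1 ∨ T.dist x u = T.dist x r + 1 := by
  obtain ⟨p, hp, hl⟩ := hT.isConnected.exists_path_of_dist x r
  by_cases hu : u ∈ p.support
  · left
    have h1 := tree_dist_split hT p hp hu
    have h2 : T.dist u r = 1 := SimpleGraph.dist_eq_one_iff_adj.mpr h.symm
    omega
  · right
    have hp' : (p.concat h).IsPath := by
      rw [Walk.isPath_def, Walk.support_concat]
      rw [Walk.isPath_def] at hp
      exact hp.append (List.nodup_singleton _) (by simpa using hu)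
    have hlen := tree_path_length_eq_dist hT _ hp'
    rw [Walk.length_concat] at hlen
    omega

/-- In a tree the neighbour of a vertex in the direction of `x` is unique. -/
lemma tree_unique_towards (hT : T.IsTree) {c b₁ b₂ x : V} (h₁ : T.Adj c b₁) (h₂ : T.Adj c b₂)
    (hd₁ : T.dist b₁ x + 1 = T.dist c x) (hd₂ : T.dist b₂ x + 1 = T.dist c x) :
    b₁ = b₂ := by
  obtain ⟨p₁, hp₁, hl₁⟩ := hT.isConnected.exists_path_of_dist b₁ x
  obtain ⟨p₂, hp₂, hl₂⟩ := hT.isConnected.exists_path_of_dist b₂ x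
  have hc₁ : c ∉ p₁.support := by
    intro hm
    have hs := tree_dist_split hT p₁ hp₁ hm
    have h2 : T.dist b₁ c = 1 := SimpleGraph.dist_eq_one_iff_adj.mpr h₁.symm
    omega
  have hc₂ : c ∉ p₂.support := by
    intro hm
    have hs := tree_dist_split hT p₂ hp₂ hm
    have h2 : T.dist b₂ c = 1 := SimpleGraph.dist_eq_one_iff_adj.mpr h₂.symm
    omega
  have hq₁ : (Walk.cons h₁ p₁).IsPath := hp₁.cons hc₁
  have hq₂ : (Walk.cons h₂ p₂).IsPath := hp₂.cons hc₂
  have heq : (⟨Walk.cons h₁ p₁, hq₁⟩ : T.Path c x) = ⟨Walk.cons h₂ p₂, hq₂⟩ :=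
    hT.IsAcyclic.path_unique _ _
  have hsup : (Walk.cons h₁ p₁).support = (Walk.cons h₂ p₂).support :=
    congrArg (fun P : T.Path c x => P.1.support) heq
  rw [Walk.support_cons, Walk.support_cons, p₁.support_eq_cons, p₂.support_eq_cons] at hsup
  rw [List.cons.injEq, List.cons.injEq] at hsup
  exact hsup.2.1

/-- The crossing formula: if `a` is on the `r`-side and `x` on the `u`-side of the
edge `(r, u)` then the distance from `a` to `x` passes through the edge. -/
lemma tree_dist_crossing (hT : T.IsTree) {r u a x : V} (h : T.Adj r u)
    (ha : T.dist u a = T.dist r a + 1) (hx : T.dist r x = T.dist u x + 1) :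
    T.dist a x = T.dist a r + 1 + T.dist u x := by
  obtain ⟨pa, hpa, hla⟩ := hT.isConnected.exists_path_of_dist a r
  obtain ⟨px, hpx, hlx⟩ := hT.isConnected.exists_path_of_dist u x
  have hrpx : r ∉ px.support := by
    intro hm
    have h2 := tree_dist_split hT px hpx hm
    have h3 : T.dist u r = 1 := SimpleGraph.dist_eq_one_iff_adj.mpr h.symm
    omega
  have hdisj : ∀ y, y ∈ pa.support → y ∉ px.support := by
    intro y hy1 hy2
    have s1 := tree_dist_split hT pa hpa hy1
    have s2 := tree_dist_split hT px hpx hy2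
    have t1 := hT.isConnected.dist_triangle (u := a) (v := y) (w := u)
    have t2 := hT.isConnected.dist_triangle (u := r) (v := y) (w := x)
    have c1 : T.dist u a = T.dist a u := SimpleGraph.dist_comm
    have c2 : T.dist r a = T.dist a r := SimpleGraph.dist_comm
    have c3 : T.dist y u = T.dist u y := SimpleGraph.dist_comm
    have c4 : T.dist r y = T.dist y r := SimpleGraph.dist_comm
    omega
  have hpath : (pa.append (Walk.cons h px)).IsPath := by
    rw [Walk.isPath_def, Walk.support_append, Walk.support_cons]
    apply List.Nodup.append
    · exact hpa.support_nodup
    · simpa using hpx.support_nodup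
    · intro y hy1 hy2
      simp only [List.tail_cons] at hy2
      exact hdisj y hy1 hy2
  have hlen := tree_path_length_eq_dist hT _ hpath
  rw [Walk.length_append, Walk.length_cons] at hlen
  omega

/-- Any chain of adjacent vertices bounds the distance. -/
lemma chain_dist_le {V : Type*} {T : SimpleGraph V} (hconn : T.Connected)
    (f : ℕ → V) (N : ℕ) (hadj : ∀ t, t < N → T.Adj (f t) (f (t + 1))) :
    ∀ t, t ≤ N → T.dist (f 0) (f t) ≤ t := by
  intro t
  induction t with
  | zero => intro _; simp
  | succ n ih =>
    intro h
    have h1 := ih (by omega)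
    have h2 : T.dist (f n) (f (n + 1)) = 1 :=
      SimpleGraph.dist_eq_one_iff_adj.mpr (hadj n (by omega))
    have h3 := hconn.dist_triangle (u := f 0) (v := f n) (w := f (n + 1))
    omega

end TreeLemmas

/-- Distance is invariant under a group acting by graph automorphisms. -/
lemma dist_smul_eq {V : Type*} {G : Type*} [Group G] [MulAction G V] {T : SimpleGraph V}
    (hconn : T.Connected) (hact : ∀ (g : G) (x y : V), T.Adj x y → T.Adj (g • x) (g • y))
    (g : G) (x y : V) : T.dist (g • x) (g • y) = T.dist x y := by
  have key : ∀ (g : G) (x y : V), T.dist (g • x) (g • y) ≤ T.dist x y := by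
    intro g x y
    obtain ⟨p, hp⟩ := hconn.exists_walk_length_eq_dist x y
    have h := SimpleGraph.dist_le
      (p.map (⟨fun v => g • v, fun {a b} h => hact g a b h⟩ : T →g T))
    rwa [SimpleGraph.Walk.length_map, hp] at h
  refine le_antisymm (key g x y) ?_
  have h := key g⁻¹ (g • x) (g • y)
  simpa using h

/-- `x` is faced by a collapsing pair. -/
def FacedBy {W V : Type*} (S : SimpleGraph W) (T : SimpleGraph V) (q : W → V) (x : V) : Prop :=
  ∃ p w₁ w₂ : W, S.Adj p w₁ ∧ S.Adj p w₂ ∧ w₁ ≠ w₂ ∧ q w₁ = q w₂ ∧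
    T.dist (q p) x = T.dist (q w₁) x + 1

/-- The key convexity statement: the set of vertices of `W` whose image is not faced
by any collapsing pair is convex. -/
lemma key_convex {W V : Type*} {S : SimpleGraph W} {T : SimpleGraph V}
    (hS : S.IsTree) (hT : T.IsTree) (q : W → V)
    (hq : ∀ a b : W, S.Adj a b → T.Adj (q a) (q b))
    (a b c : W)
    (ha : ¬ FacedBy S T q (q a)) (hc : ¬ FacedBy S T q (q c))
    (hd : S.dist a b + S.dist b c = S.dist a c) :
    ¬ FacedBy S T q (q b) := by
  intro hFb
  have Sconn := hS.isConnected
  have Tconn := hT.isConnected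
  set N₁ := S.dist a b with hN₁
  set N₂ := S.dist b c with hN₂
  set N := S.dist a c with hN
  obtain ⟨p₁, hl₁⟩ := Sconn.exists_walk_length_eq_dist a b
  obtain ⟨p₂, hl₂⟩ := Sconn.exists_walk_length_eq_dist b c
  set p := p₁.append p₂ with hpdef
  have hplen : p.length = N := by
    rw [hpdef, SimpleGraph.Walk.length_append, hl₁, hl₂, hd]
  set f : ℕ → W := p.getVert with hfdef
  have hf0 : f 0 = a := p.getVert_zero
  have hfN : f N = c := by rw [hfdef, ← hplen]; exact p.getVert_length
  have hfm : f N₁ = b := by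
    rw [hfdef, hpdef, SimpleGraph.Walk.getVert_append, hl₁]
    simp [hN₁]
  have hfadj : ∀ t, t < N → S.Adj (f t) (f (t + 1)) := by
    intro t ht
    exact p.adj_getVert_succ (by omega)
  have hcadj : ∀ t, t < N → T.Adj (q (f t)) (q (f (t + 1))) :=
    fun t ht => hq _ _ (hfadj t ht)
  -- the image of the geodesic is again a geodesic
  have main : ∀ t, t ≤ N → T.dist (q a) (q (f t)) = t := by
    intro t
    induction t using Nat.strong_induction_on with
    | _ t IH =>
      intro htN
      match t with
      | 0 => rw [hf0]; simp
      | Nat.succ n =>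
        have hn : T.dist (q a) (q (f n)) = n := IH n (by omega) (by omega)
        rcases tree_adj_dist_cases hT (hcadj n (by omega)) (q a) with hcase | hcase
        · -- downward step: produce a collapsing pair facing `q a`
          exfalso
          have hn1 : 1 ≤ n := by omega
          have hprev : T.dist (q a) (q (f (n - 1))) = n - 1 := IH (n - 1) (by omega) (by omega)
          have e : n - 1 + 1 = n := by omega
          have h₁ := hcadj (n - 1) (by omega)
          rw [e] at h₁
          have h₂ := hcadj n (by omega)
          have c1 : T.dist (q (f (n - 1))) (q a) = T.dist (q a) (q (f (n - 1))) :=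
            SimpleGraph.dist_comm
          have c2 : T.dist (q (f n)) (q a) = T.dist (q a) (q (f n)) :=
            SimpleGraph.dist_comm
          have c3 : T.dist (q (f (n + 1))) (q a) = T.dist (q a) (q (f (n + 1))) :=
            SimpleGraph.dist_comm
          have heq : q (f (n - 1)) = q (f (n + 1)) := by
            apply tree_unique_towards hT h₁.symm h₂ (x := q a) <;> omega
          by_cases hw : f (n - 1) = f (n + 1)
          · -- shortcut: would make the geodesic in `S` shorter
            have hNge : 2 ≤ N := by omega
            set f' : ℕ → W := fun s => if s < n then f s else f (s + 2) with hf'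
            have hf'adj : ∀ s, s < N - 2 → S.Adj (f' s) (f' (s + 1)) := by
              intro s hs
              by_cases hs1 : s + 1 < n
              · have hs0 : s < n := by omega
                simp only [hf', if_pos hs0, if_pos hs1]
                exact hfadj s (by omega)
              · by_cases hs0 : s < n
                · have hsn : s + 1 = n := by omega
                  simp only [hf', if_pos hs0, if_neg hs1]
                  have : s = n - 1 := by omega
                  rw [this, hw, show n - 1 + 1 + 2 = n + 2 by omega]
                  exact hfadj (n + 1) (by omega)
                · simp only [hf', if_neg hs0, if_neg hs1]
                  have : s + 1 + 2 = s + 2 + 1 := by omega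
                  rw [this]
                  exact hfadj (s + 2) (by omega)
            have hchain := chain_dist_le Sconn f' (N - 2) hf'adj (N - 2) le_rfl
            have hstart : f' 0 = a := by
              simp only [hf', if_pos (show 0 < n by omega)]; exact hf0
            have hend : f' (N - 2) = c := by
              by_cases hcase2 : N - 2 < n
              · have h2 : N - 2 = n - 1 := by omega
                rw [h2]
                simp only [hf', if_pos (show n - 1 < n by omega)]
                rw [hw, show n + 1 = N by omega]
                exact hfN
              · simp only [hf', if_neg hcase2]
                rw [show N - 2 + 2 = N by omega]
                exact hfN
            rw [hstart, hend] at hchain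
            omega
          · -- genuine collapsing pair facing `q a`
            apply ha
            have hs₁ := hfadj (n - 1) (by omega)
            rw [e] at hs₁
            refine ⟨f n, f (n + 1), f (n - 1), hfadj n (by omega), hs₁.symm, ?_, heq.symm, ?_⟩
            · exact fun hcontra => hw hcontra.symm
            · omega
        · show T.dist (q a) (q (f (n + 1))) = n + 1
          omega
  have hab : T.dist (q a) (q b) = N₁ := by
    rw [← hfm]; exact main N₁ (by omega)
  have hac : T.dist (q a) (q c) = N := by
    rw [← hfN]; exact main N le_rfl
  have hbc_le : T.dist (q b) (q c) ≤ N₂ := by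
    have hchain := chain_dist_le Tconn (fun s => q (f (N₁ + s))) N₂
      (fun s hs => by
        have h := hcadj (N₁ + s) (by omega)
        simpa [Nat.add_assoc] using h) N₂ le_rfl
    simp only [Nat.add_zero] at hchain
    rwa [hfm, show N₁ + N₂ = N from hd, hfN] at hchain
  have hbc : T.dist (q b) (q c) = N₂ := by
    have htri := Tconn.dist_triangle (u := q a) (v := q b) (w := q c)
    omega
  -- now derive the contradiction from a pair facing `q b`
  obtain ⟨p', w₁', w₂', hp1, hp2, hne, hqq, hface⟩ := hFb
  have hadj' : T.Adj (q p') (q w₁') := hq _ _ hp1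
  have haside : T.dist (q w₁') (q a) = T.dist (q p') (q a) + 1 := by
    rcases tree_adj_dist_cases hT hadj' (q a) with h | h
    · exfalso; apply ha
      refine ⟨p', w₁', w₂', hp1, hp2, hne, hqq, ?_⟩
      have c1 : T.dist (q p') (q a) = T.dist (q a) (q p') := SimpleGraph.dist_comm
      have c2 : T.dist (q w₁') (q a) = T.dist (q a) (q w₁') := SimpleGraph.dist_comm
      omega
    · have c1 : T.dist (q p') (q a) = T.dist (q a) (q p') := SimpleGraph.dist_comm
      have c2 : T.dist (q w₁') (q a) = T.dist (q a) (q w₁') := SimpleGraph.dist_comm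
      omega
  have hcside : T.dist (q w₁') (q c) = T.dist (q p') (q c) + 1 := by
    rcases tree_adj_dist_cases hT hadj' (q c) with h | h
    · exfalso; apply hc
      refine ⟨p', w₁', w₂', hp1, hp2, hne, hqq, ?_⟩
      have c1 : T.dist (q p') (q c) = T.dist (q c) (q p') := SimpleGraph.dist_comm
      have c2 : T.dist (q w₁') (q c) = T.dist (q c) (q w₁') := SimpleGraph.dist_comm
      omega
    · have c1 : T.dist (q p') (q c) = T.dist (q c) (q p') := SimpleGraph.dist_comm
      have c2 : T.dist (q w₁') (q c) = T.dist (q c) (q w₁') := SimpleGraph.dist_comm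
      omega
  have hcross1 : T.dist (q a) (q b) = T.dist (q a) (q p') + 1 + T.dist (q w₁') (q b) := by
    apply tree_dist_crossing hT hadj' ?_ hface
    have c1 : T.dist (q w₁') (q a) = T.dist (q a) (q w₁') := SimpleGraph.dist_comm
    have c2 : T.dist (q p') (q a) = T.dist (q a) (q p') := SimpleGraph.dist_comm
    omega
  have hcross2 : T.dist (q c) (q b) = T.dist (q c) (q p') + 1 + T.dist (q w₁') (q b) := by
    apply tree_dist_crossing hT hadj' ?_ hface
    have c1 : T.dist (q w₁') (q c) = T.dist (q c) (q w₁') := SimpleGraph.dist_comm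
    have c2 : T.dist (q p') (q c) = T.dist (q c) (q p') := SimpleGraph.dist_comm
    omega
  have htri2 := Tconn.dist_triangle (u := q a) (v := q p') (w := q c)
  have e1 : T.dist (q c) (q b) = T.dist (q b) (q c) := SimpleGraph.dist_comm
  have e2 : T.dist (q p') (q c) = T.dist (q c) (q p') := SimpleGraph.dist_comm
  omega

/-- Let `T` be a cocompact `G`-tree, `T̃` a minimal `G`-tree, and
`q : T̃ → T` a `G`-equivariant tree morphism which is surjective but not locally
injective.  Then every vertex `v` of `T` is faced by a collapsing pair: there
are distinct edges `(p, w₁)`, `(p, w₂)` of `T̃` with `q w₁ = q w₂` such that the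
geodesic from `q p` to `v` passes through the edge `(q p, q w₁)`. -/
theorem stmt7 {W V : Type*} (S : SimpleGraph W) (T : SimpleGraph V)
    (hS : S.IsTree) (hT : T.IsTree)
    (G : Type*) [Group G] [MulAction G W] [MulAction G V]
    (hactS : ∀ (g : G) (x y : W), S.Adj x y → S.Adj (g • x) (g • y))
    (hactT : ∀ (g : G) (x y : V), T.Adj x y → T.Adj (g • x) (g • y))
    (hcocompact : ∃ s : Finset V, ∀ v : V, ∃ g : G, g • v ∈ s)
    (hmin : IsMinimalGTree S G)
    (q : W → V) (hq : ∀ a b : W, S.Adj a b → T.Adj (q a) (q b))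
    (hequiv : ∀ (g : G) (w : W), q (g • w) = g • q w)
    (hsurj : Function.Surjective q)
    (hnotlocinj : ¬ ∀ (w a b : W), S.Adj w a → S.Adj w b → q a = q b → a = b) :
    ∀ v : V, ∃ p w₁ w₂ : W, S.Adj p w₁ ∧ S.Adj p w₂ ∧ w₁ ≠ w₂ ∧ q w₁ = q w₂ ∧
      T.dist (q p) v = T.dist (q w₁) v + 1 := by
  intro v
  by_contra hv
  -- translation invariance of being faced
  have hstep : ∀ (g : G) (x : V), FacedBy S T q x → FacedBy S T q (g • x) := by
    rintro g x ⟨p, w₁, w₂, h1, h2, h3, h4, h5⟩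
    refine ⟨g • p, g • w₁, g • w₂, hactS g _ _ h1, hactS g _ _ h2, ?_, ?_, ?_⟩
    · intro hgw; exact h3 (MulAction.injective g hgw)
    · rw [hequiv, hequiv, h4]
    · rw [hequiv, hequiv, dist_smul_eq hT.isConnected hactT,
        dist_smul_eq hT.isConnected hactT]
      exact h5
  set A : Set W := {w | ¬ FacedBy S T q (q w)} with hA
  obtain ⟨w₀, hw₀⟩ := hsurj v
  have hw₀A : w₀ ∈ A := by
    rw [hA]
    simp only [Set.mem_setOf_eq]
    rw [hw₀]
    exact hv
  have hconv : ∀ a b c : W, a ∈ A → c ∈ A → S.dist a b + S.dist b c = S.dist a c → b ∈ A :=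
    fun a b c haA hcA hdist => key_convex hS hT q hq a b c haA hcA hdist
  have hinv : ∀ (g : G) (x : W), x ∈ A → g • x ∈ A := by
    intro g w hw hF
    apply hw
    rw [hequiv] at hF
    have h := hstep g⁻¹ _ hF
    rwa [inv_smul_smul] at h
  have hAuniv : A = Set.univ := hmin A ⟨w₀, hw₀A⟩ hconv hinv
  push_neg at hnotlocinj
  obtain ⟨p₀, a₀, b₀, h1, h2, h3, h4⟩ := hnotlocinj
  have ha₀ : a₀ ∈ A := hAuniv ▸ Set.mem_univ a₀
  apply ha₀
  refine ⟨p₀, a₀, b₀, h1, h2, h4, h3, ?_⟩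
  rw [SimpleGraph.dist_self, SimpleGraph.dist_eq_one_iff_adj]
  exact hq _ _ h1
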